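/- Let $\Gamma \subseteq \mathbb{R}^n$ be a convex set, $g : \Gamma \to \mathbb{R}^r$ a function each of whose components is convex on $\Gamma$, and $h : \Gamma \to \mathbb{R}$ a convex function. Suppose there exists $\bar{x} \in \Gamma$ with $g(\bar{x}) < 0$ componentwise (Slater condition). Then the implication 'for all $x \in \Gamma$, $g(x) \le 0$ implies $h(x) \ge 0$' holds if and only if there exists $v \in \mathbb{R}^r$ with $v \ge 0$ such that $h(x) + v^\top g(x) \ge 0$ for all $x \in \Gamma$. -/

import Mathlib

open Filter Set

private lemma convex_combo_lt {a b c1 c2 d1 d2 : ℝ} (ha : 0 ≤ a) (hb : 0 ≤ b)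
    (hab : a + b = 1) (h1 : c1 < d1) (h2 : c2 < d2) :
    a * c1 + b * c2 < a * d1 + b * d2 := by
  rcases ha.eq_or_lt with heq | hpos
  · have hb1 : b = 1 := by linarith
    subst hb1; nlinarith
  · nlinarith [mul_le_mul_of_nonneg_left h2.le hb, mul_lt_mul_of_pos_left h1 hpos]

/-- Lemma 1 (Mangasarian–Wild): under convexity and a Slater condition, the
logical-implication form of prior knowledge is equivalent to the existence of a
nonnegative multiplier vector. -/
theorem stmt_0 {n r : ℕ} (Γ : Set (Fin n → ℝ)) (hΓ : Convex ℝ Γ)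
    (g : (Fin n → ℝ) → Fin r → ℝ) (h : (Fin n → ℝ) → ℝ)
    (hg : ∀ i, ConvexOn ℝ Γ (fun x => g x i)) (hh : ConvexOn ℝ Γ h)
    (slater : ∃ xbar ∈ Γ, ∀ i, g xbar i < 0) :
    (∀ x ∈ Γ, (∀ i, g x i ≤ 0) → 0 ≤ h x) ↔
      ∃ v : Fin r → ℝ, (∀ i, 0 ≤ v i) ∧ ∀ x ∈ Γ, 0 ≤ h x + ∑ i, v i * g x i := by
  constructor
  · intro H
    obtain ⟨xbar, hxbarΓ, hxbar⟩ := slater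
    -- the open convex set to separate from the origin
    set A : Set ((Fin r → ℝ) × ℝ) :=
      {p | ∃ x ∈ Γ, (∀ i, g x i < p.1 i) ∧ h x < p.2} with hAdef
    have hAconv : Convex ℝ A := by
      rintro p ⟨x, hx, hpx, hph⟩ q ⟨y, hy, hqy, hqh⟩ a b ha hb hab
      refine ⟨a • x + b • y, hΓ hx hy ha hb hab, fun i => ?_, ?_⟩
      · calc g (a • x + b • y) i ≤ a * g x i + b * g y i := by
              simpa using (hg i).2 hx hy ha hb hab
          _ < a * p.1 i + b * q.1 i := convex_combo_lt ha hb hab (hpx i) (hqy i)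
          _ = (a • p + b • q).1 i := by simp [mul_comm]
      · calc h (a • x + b • y) ≤ a * h x + b * h y := by
              simpa using hh.2 hx hy ha hb hab
          _ < a * p.2 + b * q.2 := convex_combo_lt ha hb hab hph hqh
          _ = (a • p + b • q).2 := by simp [mul_comm]
    have hAopen : IsOpen A := by
      have : A = ⋃ x ∈ Γ,
          ((⋂ i, {p : (Fin r → ℝ) × ℝ | g x i < p.1 i}) ∩ {p | h x < p.2}) := by
        ext p
        simp only [hAdef, Set.mem_setOf_eq, Set.mem_iUnion, Set.mem_inter_iff,
          Set.mem_iInter]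
        tauto
      rw [this]
      refine isOpen_biUnion fun x _ => IsOpen.inter ?_ ?_
      · exact isOpen_iInter_of_finite fun i =>
          isOpen_lt continuous_const ((continuous_apply i).comp continuous_fst)
      · exact isOpen_lt continuous_const continuous_snd
    have h0A : (0 : (Fin r → ℝ) × ℝ) ∉ A := by
      rintro ⟨x, hx, hgx, hhx⟩
      have := H x hx fun i => (hgx i).le
      simp only [Prod.snd_zero] at hhx
      linarith
    obtain ⟨f, hf⟩ := geometric_hahn_banach_open_point hAconv hAopen h0A
    have hfneg : ∀ p ∈ A, f p < 0 := by
      intro p hp; simpa using hf p hp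
    -- coefficients
    set c : Fin r → ℝ := fun i => f (Pi.single i 1, 0) with hc
    set d : ℝ := f (0, 1) with hd
    have hdecomp : ∀ (u : Fin r → ℝ) (t : ℝ),
        f (u, t) = (∑ i, u i * c i) + t * d := by
      intro u t
      have h1 : (u, t) = (∑ i, (u i) • ((Pi.single i 1 : Fin r → ℝ), (0 : ℝ)))
          + t • ((0 : Fin r → ℝ), (1 : ℝ)) := by
        refine Prod.ext ?_ ?_
        · simp only [Prod.fst_add, Prod.fst_sum, Prod.smul_fst, Prod.snd_add]
          funext j
          simp [Finset.sum_apply, Pi.single_apply]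
        · simp [Prod.snd_sum]
      rw [h1, map_add]
      simp only [map_sum, map_smul, smul_eq_mul]
      rfl
    -- a base point in A
    have hp0 : ((fun i => g xbar i + 1), h xbar + 1) ∈ A :=
      ⟨xbar, hxbarΓ, fun i => by simp, by simp⟩
    -- f is nonpositive on nonnegative directions
    have hdir : ∀ q : (Fin r → ℝ) × ℝ, (∀ i, 0 ≤ q.1 i) → 0 ≤ q.2 → f q ≤ 0 := by
      intro q hq1 hq2
      by_contra hpos
      push_neg at hpos
      set p0 : (Fin r → ℝ) × ℝ := ((fun i => g xbar i + 1), h xbar + 1) with hp0def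
      set T : ℝ := (1 - f p0) / f q with hT
      have hfp0 : f p0 < 0 := hfneg _ hp0
      have hTpos : 0 < T := div_pos (by linarith) hpos
      have hmem : p0 + T • q ∈ A := by
        refine ⟨xbar, hxbarΓ, fun i => ?_, ?_⟩
        · have : 0 ≤ T * q.1 i := mul_nonneg hTpos.le (hq1 i)
          simp only [Prod.fst_add, Prod.smul_fst, Pi.add_apply, Pi.smul_apply,
            smul_eq_mul, hp0def]
          linarith
        · have : 0 ≤ T * q.2 := mul_nonneg hTpos.le hq2
          simp only [Prod.snd_add, Prod.smul_snd, smul_eq_mul, hp0def]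
          linarith
      have := hfneg _ hmem
      rw [map_add, map_smul, smul_eq_mul, hT, div_mul_cancel₀ _ (ne_of_gt hpos)] at this
      linarith
    have hcnonpos : ∀ i, c i ≤ 0 := fun i =>
      hdir (Pi.single i 1, 0) (fun j => by
        rcases eq_or_ne i j with rfl | hij
        · simp
        · simp [Pi.single_apply, hij.symm]) le_rfl
    have hdnonpos : d ≤ 0 := hdir (0, 1) (fun j => le_rfl) zero_le_one
    -- key inequality on Γ
    have hkey : ∀ x ∈ Γ, (∑ i, g x i * c i) + h x * d ≤ 0 := by
      intro x hx
      set S : ℝ := (∑ i, g x i * c i) + h x * d with hS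
      set K : ℝ := (∑ i, c i) + d with hK
      have hlt : ∀ ε : ℝ, 0 < ε → S + ε * K < 0 := by
        intro ε hε
        have hmem : ((fun i => g x i + ε), h x + ε) ∈ A :=
          ⟨x, hx, fun i => by simp [hε], by simp [hε]⟩
        have hlt0 := hfneg _ hmem
        rw [hdecomp] at hlt0
        have expand : ∑ i, (g x i + ε) * c i
            = (∑ i, g x i * c i) + ε * ∑ i, c i := by
          rw [Finset.mul_sum, ← Finset.sum_add_distrib]
          exact Finset.sum_congr rfl fun i _ => by ring
        have heq2 : (∑ i, (g x i + ε) * c i) + (h x + ε) * d = S + ε * K := by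
          rw [expand, hS, hK]; ring
        rw [heq2] at hlt0
        exact hlt0
      have htend : Tendsto (fun ε : ℝ => S + ε * K) (nhdsWithin 0 (Set.Ioi 0)) (nhds S) := by
        have : Tendsto (fun ε : ℝ => S + ε * K) (nhds 0) (nhds (S + 0 * K)) :=
          (tendsto_id.mul_const K).const_add S
        simpa using this.mono_left nhdsWithin_le_nhds
      exact le_of_tendsto htend (eventually_of_mem self_mem_nhdsWithin
          fun ε hε => (hlt ε hε).le)
    rcases hdnonpos.eq_or_lt with hd0 | hdneg
    · -- d = 0 leads to contradiction: all c i = 0 hence f basepoint = 0, absurd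
      exfalso
      have hsum0 : (∑ i, g xbar i * c i) = 0 := by
        have h1 := hkey xbar hxbarΓ
        rw [hd0, mul_zero, add_zero] at h1
        have h2 : 0 ≤ ∑ i, g xbar i * c i :=
          Finset.sum_nonneg fun i _ => by nlinarith [hxbar i, hcnonpos i]
        linarith
      have hci : ∀ i, c i = 0 := by
        have := (Finset.sum_eq_zero_iff_of_nonneg (fun i _ =>
          by nlinarith [hxbar i, hcnonpos i])).mp hsum0
        intro i
        have hzero := this i (Finset.mem_univ i)
        rcases mul_eq_zero.mp hzero with h' | h'
        · exact absurd h' (ne_of_lt (hxbar i))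
        · exact h'
      have hfp0 : f ((fun i => g xbar i + 1), h xbar + 1) < 0 := hfneg _ hp0
      rw [hdecomp] at hfp0
      simp [hci, hd0] at hfp0
    · -- d < 0 : take v i = c i / d
      refine ⟨fun i => c i / d, fun i => ?_, fun x hx => ?_⟩
      · have := div_nonneg (neg_nonneg.2 (hcnonpos i)) (neg_nonneg.2 hdneg.le)
        rwa [neg_div_neg_eq] at this
      · have hkx := hkey x hx
        have hdne : d ≠ 0 := ne_of_lt hdneg
        have hstep : ∑ i, (c i / d) * g x i = (∑ i, g x i * c i) / d := by
          rw [Finset.sum_div]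
          exact Finset.sum_congr rfl fun i _ => by ring
        have heq : h x + ∑ i, (c i / d) * g x i
            = ((∑ i, g x i * c i) + h x * d) / d := by
          rw [hstep, add_div, mul_div_cancel_right₀ _ hdne, add_comm]
        rw [heq]
        have := div_nonneg (neg_nonneg.2 hkx) (neg_nonneg.2 hdneg.le)
        rwa [neg_div_neg_eq] at this
  · rintro ⟨v, hv, hineq⟩ x hx hgx
    have hsum : (∑ i, v i * g x i) ≤ 0 :=
      Finset.sum_nonpos fun i _ => mul_nonpos_of_nonneg_of_nonpos (hv i) (hgx i)
    have := hineq x hx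
    linarith
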